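/- Let n ≥ 2 and suppose f_c^(n-1) = f_c ∘ ⋯ ∘ f_c ((n-1)-fold iterate of f_c(x) = x² + c) is irreducible over ℚ and A_n(c) = f_c^n(0) is not a square in ℚ. Then f_c^n is irreducible over ℚ. -/

import Mathlib

open Polynomial IntermediateField
set_option synthInstance.maxHeartbeats 1000000
set_option maxHeartbeats 1000000

theorem stmt_19 (c : ℚ) (F : ℕ → Polynomial ℚ)
    (hF0 : F 0 = X)
    (hFrec : ∀ k, F (k + 1) = (X ^ 2 + C c).comp (F k))
    (n : ℕ) (hn : 2 ≤ n)
    (hirr : Irreducible (F (n - 1)))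
    (hnsq : ¬ IsSquare ((F n).eval 0)) :
    Irreducible (F n) := by
  have hg_monic : (X ^ 2 + C c : ℚ[X]).Monic := monic_X_pow_add_C c two_ne_zero
  have hdeg : ∀ k, (F k).natDegree = 2 ^ k := by
    intro k
    induction k with
    | zero => simp [hF0]
    | succ k ih =>
      rw [hFrec, natDegree_comp, natDegree_X_pow_add_C, ih, pow_succ, mul_comm]
  have hmonic : ∀ k, (F k).Monic := by
    intro k
    induction k with
    | zero => rw [hF0]; exact monic_X
    | succ k ih =>
      rw [hFrec]
      exact hg_monic.comp ih (by rw [hdeg]; positivity)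
  have hcomm : ∀ k, F (k + 1) = (F k).comp (X ^ 2 + C c) := by
    intro k
    induction k with
    | zero => rw [hFrec, hF0, comp_X, X_comp]
    | succ k ih =>
      rw [hFrec (k+1), ih, ← comp_assoc, ← hFrec k, ih]
  obtain ⟨m, hm⟩ : ∃ m, n = m + 1 := ⟨n - 1, by omega⟩
  have hm1 : n - 1 = m := by omega
  subst hm
  rw [hm1] at hirr
  have hFn : F (m + 1) = (F m).comp (X ^ 2 + C c) := hcomm m
  have hdm : (F m).natDegree = 2 ^ m := hdeg m
  have hdm_even : Even (F m).natDegree := by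
    rw [hdm]; exact (Nat.even_pow).mpr ⟨even_two, by omega⟩
  have hdm_pos : 0 < (F m).natDegree := by rw [hdm]; positivity
  have heval : (F (m + 1)).eval 0 = (F m).eval c := by
    rw [hFn, eval_comp]; norm_num
  rw [hFn]
  apply Polynomial.irreducible_comp (hmonic m) hg_monic hirr
  intro E _ _ x hmin
  letI : Algebra ℚ ↥ℚ⟮x⟯ := ℚ⟮x⟯.algebra'
  have hxint : IsIntegral ℚ x := by
    by_contra hc
    exact (hmonic m).ne_zero (hmin ▸ minpoly.eq_zero hc)
  haveI : FiniteDimensional ℚ ℚ⟮x⟯ := IntermediateField.adjoin.finiteDimensional hxint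
  have hminα : minpoly ℚ (AdjoinSimple.gen ℚ x) = F m := by
    rw [minpoly_gen ℚ x]; exact hmin
  set β : ℚ⟮x⟯ := AdjoinSimple.gen ℚ x - algebraMap ℚ ℚ⟮x⟯ c with hβdef
  have hminβ : minpoly ℚ (β)
      = (F m).comp (X + C c) := by
    rw [minpoly.sub_algebraMap, hminα]
  have hβdeg : (minpoly ℚ (β)).natDegree
      = (F m).natDegree := by
    rw [hminβ, natDegree_comp, natDegree_X_add_C, mul_one]
  have hpoly : (X ^ 2 + C c : ℚ[X]).map (algebraMap ℚ ℚ⟮x⟯) - C (AdjoinSimple.gen ℚ x)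
      = X ^ 2 - C (β) := by
    rw [Polynomial.map_add, Polynomial.map_pow, map_X, map_C, map_sub]
    ring
  rw [hpoly]
  apply X_pow_sub_C_irreducible_of_prime Nat.prime_two
  intro b hb
  apply hnsq
  rw [heval]
  have hfr : Module.finrank ℚ ℚ⟮x⟯ = (F m).natDegree := by
    rw [IntermediateField.adjoin.finrank hxint, hmin]
  have hβint : IsIntegral ℚ (β) :=
    IsIntegral.of_finite ℚ _
  have hfrβ : Module.finrank ℚ ↥(IntermediateField.adjoin ℚ ({β} : Set ↥ℚ⟮x⟯))
      = (F m).natDegree := by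
    rw [IntermediateField.adjoin.finrank hβint, hβdeg]
  have htower := Module.finrank_mul_finrank ℚ
    ↥(IntermediateField.adjoin ℚ ({β} : Set ↥ℚ⟮x⟯)) ℚ⟮x⟯
  have hone : Module.finrank ↥(IntermediateField.adjoin ℚ ({β} : Set ↥ℚ⟮x⟯)) ℚ⟮x⟯ = 1 := by
    rw [hfrβ, hfr] at htower
    exact Nat.eq_of_mul_eq_mul_left hdm_pos (by rw [htower, mul_one])
  have hsplits : ((minpoly ℚ (β)).map
      (algebraMap ℚ (AlgebraicClosure ℚ))).Splits := IsAlgClosed.splits _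
  have hnorm := Algebra.norm_eq_prod_roots (K := ℚ) (F := AlgebraicClosure ℚ) hsplits
  rw [hone, pow_one] at hnorm
  have hmapmonic : ((minpoly ℚ (β)).map
      (algebraMap ℚ (AlgebraicClosure ℚ))).Monic := (minpoly.monic hβint).map _
  have hmapsplits : ((minpoly ℚ (β)).map
      (algebraMap ℚ (AlgebraicClosure ℚ))).Splits :=
    IsAlgClosed.splits _
  have hprod := hmapsplits.coeff_zero_eq_prod_roots_of_monic hmapmonic
  rw [natDegree_map, hβdeg, hdm_even.neg_one_pow, one_mul] at hprod
  have hcoeff : ((minpoly ℚ (β)).map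
      (algebraMap ℚ (AlgebraicClosure ℚ))).coeff 0
      = algebraMap ℚ (AlgebraicClosure ℚ) ((F m).eval c) := by
    rw [coeff_map, coeff_zero_eq_eval_zero, hminβ, eval_comp]
    norm_num
  have hfinal : algebraMap ℚ (AlgebraicClosure ℚ)
      (Algebra.norm ℚ (β))
      = algebraMap ℚ (AlgebraicClosure ℚ) ((F m).eval c) := by
    rw [hnorm, aroots, ← hprod, hcoeff]
  have hnormval : Algebra.norm ℚ (β)
      = (F m).eval c := (algebraMap ℚ (AlgebraicClosure ℚ)).injective hfinal
  rw [← hnormval, ← hb]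
  exact ⟨Algebra.norm ℚ b, by rw [← map_mul, sq]⟩
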